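/- Let i, k ≥ 1 and j ≥ 0 be natural numbers, and let c = iterExp j 1 + 1. Then the function n ↦ iterExp i (c * iterExp j (n^k)) is not in O(iterExp (i+j) (n^k)): for all constants d ≥ iterExp (i+j) 1 and n₀, there exists n ≥ n₀ with iterExp i (c * iterExp j (n^k)) > d * iterExp (i+j) (n^k). -/

import Mathlib

/-- The iterated exponential function: `iterExp 0 x = x`, `iterExp (i+1) x = 2 ^ iterExp i x`. -/
def iterExp : ℕ → ℕ → ℕ
  | 0, x => x
  | i + 1, x => 2 ^ iterExp i x

lemma iterExp_mono (t : ℕ) {a b : ℕ} (h : a ≤ b) : iterExp t a ≤ iterExp t b := by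
  induction t with
  | zero => simpa [iterExp]
  | succ t ih => simpa [iterExp] using Nat.pow_le_pow_right (by norm_num) ih

lemma le_iterExp (t x : ℕ) : x ≤ iterExp t x := by
  induction t with
  | zero => simp [iterExp]
  | succ t ih => exact le_trans ih (le_of_lt (by simpa [iterExp] using Nat.lt_two_pow_self (n := iterExp t x)))

lemma iterExp_add_le (t a b : ℕ) : iterExp t a + b ≤ iterExp t (a + b) := by
  induction t with
  | zero => simp [iterExp]
  | succ t ih =>
    simp only [iterExp]
    calc 2 ^ iterExp t a + b ≤ 2 ^ iterExp t a + b * 2 ^ iterExp t a := by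
          have : 1 ≤ 2 ^ iterExp t a := Nat.one_le_two_pow
          nlinarith
      _ = (1 + b) * 2 ^ iterExp t a := by ring
      _ ≤ 2 ^ b * 2 ^ iterExp t a := by
          exact Nat.mul_le_mul_right _ (by have := Nat.lt_two_pow_self (n := b); omega)
      _ = 2 ^ (iterExp t a + b) := by rw [← pow_add]; ring_nf
      _ ≤ 2 ^ iterExp t (a + b) := Nat.pow_le_pow_right (by norm_num) ih

lemma iterExp_iterExp (i j x : ℕ) : iterExp (i + j) x = iterExp i (iterExp j x) := by
  induction i with
  | zero => simp [iterExp]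
  | succ i ih => rw [Nat.succ_add]; simp [iterExp, ih]

theorem iterExp_not_bigO (i j k : ℕ) (hi : 1 ≤ i) (hk : 1 ≤ k) :
    ∀ d : ℕ, iterExp (i + j) 1 ≤ d → ∀ n₀ : ℕ,
      ∃ n : ℕ, n₀ ≤ n ∧
        d * iterExp (i + j) (n ^ k) < iterExp i ((iterExp j 1 + 1) * iterExp j (n ^ k)) := by
  intro d hd n₀
  refine ⟨max n₀ (d + 1), le_max_left _ _, ?_⟩
  set n := max n₀ (d + 1) with hn
  have hn1 : 1 ≤ n := le_trans (by omega) (le_max_right n₀ (d + 1))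
  have hdn : d < n := lt_of_lt_of_le (by omega) (le_max_right n₀ (d + 1))
  set m := iterExp j (n ^ k) with hm
  have hnm : n ≤ m := by
    calc n = n ^ 1 := (pow_one n).symm
      _ ≤ n ^ k := Nat.pow_le_pow_right hn1 hk
      _ ≤ m := le_iterExp j (n ^ k)
  obtain ⟨i', rfl⟩ : ∃ i', i = i' + 1 := ⟨i - 1, by omega⟩
  have hc : 2 ≤ iterExp j 1 + 1 := by have := le_iterExp j 1; omega
  have key : m + n ≤ (iterExp j 1 + 1) * m := by nlinarith
  have h1 : iterExp i' m + n ≤ iterExp i' ((iterExp j 1 + 1) * m) :=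
    le_trans (iterExp_add_le i' m n) (iterExp_mono i' key)
  have h2 : iterExp (i' + 1 + j) (n ^ k) = 2 ^ iterExp i' m := by
    rw [iterExp_iterExp]; rfl
  rw [h2]
  show d * 2 ^ iterExp i' m < 2 ^ iterExp i' ((iterExp j 1 + 1) * m)
  calc d * 2 ^ iterExp i' m < 2 ^ n * 2 ^ iterExp i' m := by
        have h2n : d < 2 ^ n := lt_of_lt_of_le hdn (Nat.le_of_lt (Nat.lt_two_pow_self (n := n)))
        exact (Nat.mul_lt_mul_right (Nat.pow_pos (n := iterExp i' m) (by norm_num : 0 < 2))).mpr h2n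
    _ = 2 ^ (iterExp i' m + n) := by rw [← pow_add]; ring_nf
    _ ≤ _ := Nat.pow_le_pow_right (by norm_num) h1
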